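/- Let Θ be a nonempty type, H0 ⊆ Θ and Θ1 ⊆ Θ nonempty subsets, and L : ℕ → Θ → ℝ a function (L t θ is the log-likelihood of observation t under parameter θ). For natural numbers i < j define m_{i,j} = sup_{θ0 ∈ H0, θ1 ∈ Θ1} [Σ_{t=1}^{i} L t θ0 + Σ_{t=i+1}^{j} L t θ1] − sup_{θ0 ∈ H0} Σ_{t=1}^{j} L t θ0, and assume every supremum appearing is finite (attained or bounded above). Suppose additionally that H0 ⊆ Θ1. Then for any 0 ≤ τ₁ < τ₂ < … < τ_n < T, the maximum over i = 1, …, n of m_{τ_i, T} satisfies max_{i=1,…,n} m_{τ_i, T} ≤ Σ_{i=1}^{n−1} m_{τ_i, τ_{i+1}} + m_{τ_n, T}. -/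

import Mathlib

open Finset

/-- The likelihood-ratio statistic for a single change at time `i` using data up to time `j`:
the maximized two-segment log-likelihood (pre-change parameter in `H0`, post-change
parameter in `Θ1`) minus the maximized no-change log-likelihood. -/
noncomputable def changeLRStat {Θ : Type*} (H0 Θ1 : Set Θ) (L : ℕ → Θ → ℝ) (i j : ℕ) : ℝ :=
  sSup {v : ℝ | ∃ θ0 ∈ H0, ∃ θ1 ∈ Θ1,
      v = (∑ t ∈ Finset.Icc 1 i, L t θ0) + ∑ t ∈ Finset.Ioc i j, L t θ1}
    - sSup {v : ℝ | ∃ θ0 ∈ H0, v = ∑ t ∈ Finset.Icc 1 j, L t θ0}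

section aux
variable {Θ : Type*} {H0 Θ1 : Set Θ} {L : ℕ → Θ → ℝ}

private lemma aux_sum_split (f : ℕ → ℝ) {i j : ℕ} (h : i ≤ j) :
    (∑ t ∈ Finset.Icc 1 i, f t) + ∑ t ∈ Finset.Ioc i j, f t
      = ∑ t ∈ Finset.Icc 1 j, f t := by
  have e : ∀ m : ℕ, Finset.Icc 1 m = Finset.Ioc 0 m := fun m => by
    ext x; simp [Nat.lt_iff_add_one_le]
  rw [e i, e j]
  exact Finset.sum_Ioc_consecutive f (Nat.zero_le i) h

private lemma aux_nonneg (hH0 : H0.Nonempty) (hsub : H0 ⊆ Θ1)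
    (hbdd2 : ∀ i j : ℕ, BddAbove {v : ℝ | ∃ θ0 ∈ H0, ∃ θ1 ∈ Θ1,
        v = (∑ t ∈ Finset.Icc 1 i, L t θ0) + ∑ t ∈ Finset.Ioc i j, L t θ1})
    {i j : ℕ} (hij : i ≤ j) : 0 ≤ changeLRStat H0 Θ1 L i j := by
  obtain ⟨θa, hθa⟩ := hH0
  unfold changeLRStat
  rw [sub_nonneg]
  refine csSup_le ⟨_, θa, hθa, rfl⟩ ?_
  rintro v ⟨θ0, hθ0, rfl⟩
  exact le_csSup (hbdd2 i j)
    ⟨θ0, hθ0, θ0, hsub hθ0, (aux_sum_split (L · θ0) hij).symm⟩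

private lemma aux_trans (hH0 : H0.Nonempty) (hΘ1 : Θ1.Nonempty)
    (hbdd2 : ∀ i j : ℕ, BddAbove {v : ℝ | ∃ θ0 ∈ H0, ∃ θ1 ∈ Θ1,
        v = (∑ t ∈ Finset.Icc 1 i, L t θ0) + ∑ t ∈ Finset.Ioc i j, L t θ1})
    {i j k : ℕ} (hij : i ≤ j) (hjk : j ≤ k) :
    changeLRStat H0 Θ1 L i k ≤ changeLRStat H0 Θ1 L i j + changeLRStat H0 Θ1 L j k := by
  obtain ⟨θa, hθa⟩ := hH0
  obtain ⟨θb, hθb⟩ := hΘ1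
  unfold changeLRStat
  have key : sSup {v : ℝ | ∃ θ0 ∈ H0, ∃ θ1 ∈ Θ1,
      v = (∑ t ∈ Finset.Icc 1 i, L t θ0) + ∑ t ∈ Finset.Ioc i k, L t θ1}
      ≤ sSup {v : ℝ | ∃ θ0 ∈ H0, ∃ θ1 ∈ Θ1,
      v = (∑ t ∈ Finset.Icc 1 i, L t θ0) + ∑ t ∈ Finset.Ioc i j, L t θ1}
      + (sSup {v : ℝ | ∃ θ0 ∈ H0, ∃ θ1 ∈ Θ1,
      v = (∑ t ∈ Finset.Icc 1 j, L t θ0) + ∑ t ∈ Finset.Ioc j k, L t θ1}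
      - sSup {v : ℝ | ∃ θ0 ∈ H0, v = ∑ t ∈ Finset.Icc 1 j, L t θ0}) := by
    refine csSup_le ⟨_, θa, hθa, θb, hθb, rfl⟩ ?_
    rintro v ⟨θ0, hθ0, θ1, hθ1, rfl⟩
    have hsplit : (∑ t ∈ Finset.Ioc i j, L t θ1) + ∑ t ∈ Finset.Ioc j k, L t θ1
        = ∑ t ∈ Finset.Ioc i k, L t θ1 :=
      Finset.sum_Ioc_consecutive _ hij hjk
    have h1 : (∑ t ∈ Finset.Icc 1 i, L t θ0) + ∑ t ∈ Finset.Ioc i j, L t θ1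
        ≤ sSup {v : ℝ | ∃ θ0 ∈ H0, ∃ θ1 ∈ Θ1,
          v = (∑ t ∈ Finset.Icc 1 i, L t θ0) + ∑ t ∈ Finset.Ioc i j, L t θ1} :=
      le_csSup (hbdd2 i j) ⟨θ0, hθ0, θ1, hθ1, rfl⟩
    have h2 : sSup {v : ℝ | ∃ θ0 ∈ H0, v = ∑ t ∈ Finset.Icc 1 j, L t θ0}
        ≤ sSup {v : ℝ | ∃ θ0 ∈ H0, ∃ θ1 ∈ Θ1,
          v = (∑ t ∈ Finset.Icc 1 j, L t θ0) + ∑ t ∈ Finset.Ioc j k, L t θ1}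
          - ∑ t ∈ Finset.Ioc j k, L t θ1 := by
      refine csSup_le ⟨_, θa, hθa, rfl⟩ ?_
      rintro w ⟨θ0', hθ0', rfl⟩
      have := le_csSup (hbdd2 j k) ⟨θ0', hθ0', θ1, hθ1, rfl⟩
      linarith
    linarith
  linarith

end aux

theorem focus_prop2_maxima_bound
    {Θ : Type*} [Nonempty Θ] (H0 Θ1 : Set Θ)
    (hH0 : H0.Nonempty) (hΘ1 : Θ1.Nonempty) (hsub : H0 ⊆ Θ1)
    (L : ℕ → Θ → ℝ)
    (hbdd2 : ∀ i j : ℕ, BddAbove {v : ℝ | ∃ θ0 ∈ H0, ∃ θ1 ∈ Θ1,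
        v = (∑ t ∈ Finset.Icc 1 i, L t θ0) + ∑ t ∈ Finset.Ioc i j, L t θ1})
    (hbdd1 : ∀ j : ℕ, BddAbove {v : ℝ | ∃ θ0 ∈ H0, v = ∑ t ∈ Finset.Icc 1 j, L t θ0})
    (n T : ℕ) (hn : 1 ≤ n) (τ : ℕ → ℕ)
    (hτmono : ∀ i, 1 ≤ i → i < n → τ i < τ (i + 1))
    (hτT : τ n < T) :
    (Finset.Icc 1 n).sup' (Finset.nonempty_Icc.mpr hn)
        (fun i => changeLRStat H0 Θ1 L (τ i) T)
      ≤ (∑ i ∈ Finset.Ico 1 n, changeLRStat H0 Θ1 L (τ i) (τ (i + 1)))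
        + changeLRStat H0 Θ1 L (τ n) T := by
  -- monotonicity of τ on [1, n]
  have hmono : ∀ a b, 1 ≤ a → a ≤ b → b ≤ n → τ a ≤ τ b := by
    intro a b ha hab hbn
    induction b, hab using Nat.le_induction with
    | base => exact le_rfl
    | succ b hab ih =>
        have hb1 : 1 ≤ b := le_trans ha hab
        have hstep := hτmono b hb1 (by omega)
        have := ih (by omega)
        omega
  -- main per-index bound, by downward induction encoded via distance to n
  have main : ∀ d i, 1 ≤ i → i + d = n →
      changeLRStat H0 Θ1 L (τ i) T
        ≤ (∑ t ∈ Finset.Ico i n, changeLRStat H0 Θ1 L (τ t) (τ (t + 1)))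
          + changeLRStat H0 Θ1 L (τ n) T := by
    intro d
    induction d with
    | zero =>
        intro i hi hin
        simp only [Nat.add_zero] at hin
        subst hin
        simp
    | succ d ih =>
        intro i hi hin
        have hiln : i < n := by omega
        have h1 : changeLRStat H0 Θ1 L (τ i) T
            ≤ changeLRStat H0 Θ1 L (τ i) (τ (i + 1)) + changeLRStat H0 Θ1 L (τ (i + 1)) T := by
          apply aux_trans hH0 hΘ1 hbdd2 (hτmono i hi hiln).le
          exact le_trans (hmono (i+1) n (by omega) (by omega) le_rfl) hτT.le
        have h2 := ih (i + 1) (by omega) (by omega)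
        rw [Finset.sum_eq_sum_Ico_succ_bot hiln]
        linarith
  apply Finset.sup'_le
  intro i hi
  rw [Finset.mem_Icc] at hi
  have := main (n - i) i hi.1 (by omega)
  have hpad : (∑ t ∈ Finset.Ico i n, changeLRStat H0 Θ1 L (τ t) (τ (t + 1)))
      ≤ ∑ t ∈ Finset.Ico 1 n, changeLRStat H0 Θ1 L (τ t) (τ (t + 1)) := by
    apply Finset.sum_le_sum_of_subset_of_nonneg
    · exact Finset.Ico_subset_Ico hi.1 le_rfl
    · intro t ht _
      rw [Finset.mem_Ico] at ht
      exact aux_nonneg hH0 hsub hbdd2 (hτmono t ht.1 ht.2).le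
  linarith
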